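/- arXiv:2008.01757 — 2 statements merged into one kernel-verified Lean document; each statement's English description precedes it below -/
import Mathlib

section
/- Let R be a commutative ring, t ∈ R, and let R_t denote the localization of R away from t. For every R-module M, the assignment f ↦ (f(t^{-n}))_{n≥0} is an R-module isomorphism from Hom_R(R_t, M) onto the R-submodule of ∏_{n∈ℕ} M consisting of all sequences (m_n)_{n∈ℕ} satisfying t • m_{n+1} = m_n for all n. -/
/-- Let `R` be a commutative ring, `t ∈ R`, and let `R_t` denote the
localization of `R` away from `t`.  For every `R`-module `M`, the assignment
`f ↦ (f(t^{-n}))_{n ≥ 0}` is an `R`-module isomorphism from `Hom_R(R_t, M)` onto the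
`R`-submodule of `∏_{n ∈ ℕ} M` consisting of all sequences `(m_n)_n` with
`t • m_{n+1} = m_n` for all `n`. -/
theorem stmt1 (R : Type*) [CommRing R] (t : R)
    (M : Type*) [AddCommGroup M] [Module R M]
    (S : Submodule R (ℕ → M))
    (hS : ∀ m : ℕ → M, m ∈ S ↔ ∀ n : ℕ, t • m (n + 1) = m n) :
    ∃ e : (Localization.Away t →ₗ[R] M) ≃ₗ[R] S,
      ∀ (f : Localization.Away t →ₗ[R] M) (n : ℕ),
        (e f : ℕ → M) n = f (IsLocalization.Away.invSelf t ^ n) := by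
  classical
  set A := Localization.Away t with hA
  set u : A := IsLocalization.Away.invSelf t with hu
  have hmul : algebraMap R A t * u = 1 := IsLocalization.Away.mul_invSelf t
  have htu : ∀ n : ℕ, (t ^ n : R) • (u ^ n) = (1 : A) := by
    intro n
    rw [Algebra.smul_def, map_pow, ← mul_pow, hmul, one_pow]
  -- shift map on S
  have hmem : ∀ (m : S), (fun n => (m : ℕ → M) (n + 1)) ∈ S := by
    intro m
    rw [hS]
    intro n
    exact (hS m).1 m.2 (n + 1)
  let σ : S →ₗ[R] S :=
    { toFun := fun m => ⟨fun n => (m : ℕ → M) (n + 1), hmem m⟩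
      map_add' := fun x y => rfl
      map_smul' := fun r x => rfl }
  -- t acts invertibly on S
  have hUnit_t : IsUnit ((algebraMap R (Module.End R S)) t) := by
    rw [isUnit_iff_exists]
    refine ⟨σ, ?_, ?_⟩
    · ext m n
      show t • ((m : ℕ → M) (n + 1)) = (m : ℕ → M) n
      exact (hS m).1 m.2 n
    · ext m n
      show t • ((m : ℕ → M) (n + 1)) = (m : ℕ → M) n
      exact (hS m).1 m.2 n
  have hUnits : ∀ s : Submonoid.powers t, IsUnit ((algebraMap R (Module.End R S)) s) := by
    rintro ⟨s, n, rfl⟩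
    rw [map_pow]
    exact hUnit_t.pow n
  have hsmul_inj : ∀ (n : ℕ) (x y : S), (t ^ n : R) • x = (t ^ n : R) • y → x = y := by
    intro n x y h
    have := (Module.End.isUnit_iff _).1 (hUnits ⟨t ^ n, n, rfl⟩) |>.1
    apply this
    exact h
  -- every element of A is r • uⁿ
  have hgen : ∀ x : A, ∃ (r : R) (n : ℕ), x = r • u ^ n := by
    intro x
    obtain ⟨⟨r, s⟩, h⟩ := IsLocalization.surj (Submonoid.powers t) x
    obtain ⟨n, hn⟩ := s.2
    refine ⟨r, n, ?_⟩
    have : x * algebraMap R A (t ^ n) = algebraMap R A r := by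
      rw [show (t ^ n : R) = (s : R) from hn]; exact h
    calc x = x * ((t ^ n : R) • u ^ n) := by rw [htu, mul_one]
      _ = (x * algebraMap R A (t ^ n)) * u ^ n := by
          rw [Algebra.smul_def]; ring
      _ = r • u ^ n := by rw [this, Algebra.smul_def]
  -- the forward map
  have hφmem : ∀ f : A →ₗ[R] M, (fun n => f (u ^ n)) ∈ S := by
    intro f
    rw [hS]
    intro n
    rw [← map_smul, Algebra.smul_def, pow_succ', ← mul_assoc, hmul, one_mul]
  let φ : (A →ₗ[R] M) →ₗ[R] S :=
    { toFun := fun f => ⟨fun n => f (u ^ n), hφmem f⟩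
      map_add' := fun f g => rfl
      map_smul' := fun r f => rfl }
  have hinj : Function.Injective φ := by
    intro f g hfg
    ext x
    obtain ⟨r, n, rfl⟩ := hgen x
    have : f (u ^ n) = g (u ^ n) := congrFun (congrArg Subtype.val hfg) n
    rw [map_smul, map_smul, this]
  have hsurj : Function.Surjective φ := by
    intro m
    let L : A →ₗ[R] S :=
      IsLocalizedModule.lift (Submonoid.powers t) (Algebra.linearMap R A)
        (LinearMap.toSpanSingleton R S m) hUnits
    -- compute L (u ^ n)
    have hL : ∀ n : ℕ, L (u ^ n) = ⟨fun k => (m : ℕ → M) (k + n), by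
        rw [hS]; intro k
        have := (hS m).1 m.2 (k + n)
        rwa [show k + n + 1 = k + 1 + n by omega] at this⟩ := by
      intro n
      apply hsmul_inj n
      have h1 : (t ^ n : R) • L (u ^ n) = m := by
        rw [← map_smul, htu]
        have : (1 : A) = Algebra.linearMap R A 1 := by simp
        rw [this, IsLocalizedModule.lift_apply]
        simp [LinearMap.toSpanSingleton_apply]
      rw [h1]
      have key : ∀ (n k : ℕ), (t ^ n : R) • (m : ℕ → M) (k + n) = (m : ℕ → M) k := by
        intro n
        induction n with
        | zero => intro k; simp
        | succ n ih =>
          intro k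
          have := (hS m).1 m.2 (k + n)
          calc (t ^ (n + 1) : R) • (m : ℕ → M) (k + (n + 1))
              = (t ^ n : R) • (t • (m : ℕ → M) (k + n + 1)) := by
                rw [pow_succ, mul_smul]
                rfl
            _ = (m : ℕ → M) k := by rw [this]; exact ih k
      ext k
      show (m : ℕ → M) k = (t ^ n : R) • (m : ℕ → M) (k + n)
      exact (key n k).symm
    refine ⟨((LinearMap.proj 0).comp S.subtype).comp L, ?_⟩
    ext n
    show (((LinearMap.proj 0).comp S.subtype).comp L) (u ^ n) = (m : ℕ → M) n
    rw [LinearMap.comp_apply, hL n]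
    show (m : ℕ → M) (0 + n) = (m : ℕ → M) n
    rw [Nat.zero_add]
  exact ⟨LinearEquiv.ofBijective φ ⟨hinj, hsurj⟩, fun f n => rfl⟩
end

section
/- Let C be a field, R a commutative C-algebra, and t ∈ R. If M is an R-module that is finite-dimensional as a C-vector space, then Ext^i_R(R_t, M) = 0 for all i ≥ 1, where R_t denotes the localization of R away from t. -/
open CategoryTheory

universe u


section Tele
variable {R : Type u} [CommRing R] (t : R)

/-- The telescope map `⊕ℕ R → ⊕ℕ R`, `e n ↦ e n - t • e (n+1)`. -/
noncomputable def teleMap : (ℕ →₀ R) →ₗ[R] (ℕ →₀ R) :=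
  Finsupp.lsum ℕ fun n =>
    LinearMap.toSpanSingleton R (ℕ →₀ R) (Finsupp.single n 1 - Finsupp.single (n + 1) t)

lemma teleMap_single (n : ℕ) (r : R) :
    teleMap t (Finsupp.single n r) = Finsupp.single n r - Finsupp.single (n + 1) (r * t) := by
  rw [teleMap, Finsupp.lsum_single, LinearMap.toSpanSingleton_apply, smul_sub,
    Finsupp.smul_single, Finsupp.smul_single, smul_eq_mul, smul_eq_mul, mul_one]

lemma teleMap_apply_zero (x : ℕ →₀ R) : teleMap t x 0 = x 0 := by
  classical
  rw [teleMap, Finsupp.lsum_apply, Finsupp.sum_apply]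
  have h : ∀ (n : ℕ) (r : R),
      (LinearMap.toSpanSingleton R (ℕ →₀ R)
          (Finsupp.single n 1 - Finsupp.single (n + 1) t) r) 0
        = if n = 0 then r else 0 := by
    intro n r
    rw [LinearMap.toSpanSingleton_apply, smul_sub, Finsupp.smul_single, Finsupp.smul_single]
    simp [Finsupp.single_apply]
  simp_rw [h]
  exact Finsupp.sum_ite_self_eq' x 0

lemma teleMap_apply_succ (x : ℕ →₀ R) (m : ℕ) :
    teleMap t x (m + 1) = x (m + 1) - t * x m := by
  classical
  rw [teleMap, Finsupp.lsum_apply, Finsupp.sum_apply]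
  have h : ∀ (n : ℕ) (r : R),
      (LinearMap.toSpanSingleton R (ℕ →₀ R)
          (Finsupp.single n 1 - Finsupp.single (n + 1) t) r) (m + 1)
        = (if n = m + 1 then r else 0) - (if n = m then r * t else 0) := by
    intro n r
    rw [LinearMap.toSpanSingleton_apply, smul_sub, Finsupp.smul_single, Finsupp.smul_single]
    simp only [Finsupp.sub_apply, Finsupp.single_apply, smul_eq_mul, mul_one]
    congr 1
    simp [Nat.succ_inj]
  simp_rw [h]
  rw [Finsupp.sum_sub, Finsupp.sum_ite_self_eq' x (m + 1)]
  have h2 : (x.sum fun n r => if n = m then r * t else 0) = x m * t := by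
    rw [Finsupp.sum_ite_eq' x m (fun _ r => r * t)]
    split
    · rfl
    · next hm => rw [Finsupp.notMem_support_iff.mp hm, zero_mul]
  rw [h2, mul_comm]

lemma teleMap_injective : Function.Injective (teleMap t) := by
  intro x y h
  rw [← sub_eq_zero, ← map_sub] at h
  rw [← sub_eq_zero]
  set z := x - y with hz
  have hall : ∀ m, z m = 0 := by
    intro m
    induction m with
    | zero => rw [← teleMap_apply_zero t z, h]; rfl
    | succ m ih =>
      have := teleMap_apply_succ t z m
      rw [h] at this
      simp only [Finsupp.coe_zero, Pi.zero_apply] at this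
      rw [ih, mul_zero, sub_zero] at this
      exact this.symm
  ext m
  exact hall m
end Tele

section Loc
variable {R : Type u} [CommRing R] (t : R)

/-- `1 / t^n` in the localization away from `t`. -/
noncomputable def uElt (n : ℕ) : Localization.Away t :=
  IsLocalization.mk' (Localization.Away t) (1 : R)
    (⟨t ^ n, n, rfl⟩ : Submonoid.powers t)

/-- The map `⊕ℕ R → R_t`, `e n ↦ 1 / t^n`. -/
noncomputable def locMap : (ℕ →₀ R) →ₗ[R] Localization.Away t :=
  Finsupp.lsum ℕ fun n => LinearMap.toSpanSingleton R (Localization.Away t) (uElt t n)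

lemma locMap_single (n : ℕ) (r : R) :
    locMap t (Finsupp.single n r) = IsLocalization.mk' (Localization.Away t) r
      (⟨t ^ n, n, rfl⟩ : Submonoid.powers t) := by
  rw [locMap, Finsupp.lsum_single, LinearMap.toSpanSingleton_apply, uElt,
    IsLocalization.smul_mk', mul_one]

lemma t_smul_uElt (n : ℕ) : t • uElt t (n + 1) = uElt t n := by
  rw [uElt, uElt, IsLocalization.smul_mk', mul_one]
  have : (⟨t ^ (n + 1), n + 1, rfl⟩ : Submonoid.powers t)
      = (⟨t ^ n, n, rfl⟩ : Submonoid.powers t) * ⟨t, 1, pow_one t⟩ := by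
    ext
    simp [pow_succ]
  rw [this]
  have := IsLocalization.mk'_cancel (S := Localization.Away t) (1 : R)
    (⟨t ^ n, n, rfl⟩ : Submonoid.powers t) (⟨t, 1, pow_one t⟩ : Submonoid.powers t)
  rw [← this, one_mul]

lemma locMap_single' (n : ℕ) (r : R) : locMap t (Finsupp.single n r) = r • uElt t n := by
  rw [locMap, Finsupp.lsum_single, LinearMap.toSpanSingleton_apply]

lemma locMap_comp_teleMap : (locMap t).comp (teleMap t) = 0 := by
  apply Finsupp.lhom_ext
  intro n r
  rw [LinearMap.comp_apply, teleMap_single, map_sub, locMap_single', locMap_single',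
    LinearMap.zero_apply, mul_smul, t_smul_uElt, sub_self]

lemma locMap_surjective : Function.Surjective (locMap t) := by
  intro z
  obtain ⟨⟨x, s⟩, hxs⟩ := IsLocalization.mk'_surjective (M := Submonoid.powers t)
    (S := Localization.Away t) z
  have hxs : IsLocalization.mk' (Localization.Away t) x s = z := hxs
  obtain ⟨n, hn⟩ := s.2
  refine ⟨Finsupp.single n x, ?_⟩
  rw [locMap_single, ← hxs]
  congr 1
  exact Subtype.ext hn
end Loc

section Ker
variable {R : Type u} [CommRing R] (t : R)

lemma single_sub_mem_range (n k : ℕ) (r : R) :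
    Finsupp.single n r - Finsupp.single (n + k) (r * t ^ k)
      ∈ LinearMap.range (teleMap t) := by
  induction k with
  | zero => simp
  | succ k ih =>
    have h2 : Finsupp.single (n + k) (r * t ^ k) - Finsupp.single (n + k + 1) (r * t ^ k * t)
        ∈ LinearMap.range (teleMap t) :=
      ⟨Finsupp.single (n + k) (r * t ^ k), teleMap_single t _ _⟩
    have h3 := Submodule.add_mem _ ih h2
    have he : Finsupp.single n r - Finsupp.single (n + (k + 1)) (r * t ^ (k + 1))
        = (Finsupp.single n r - Finsupp.single (n + k) (r * t ^ k))
          + (Finsupp.single (n + k) (r * t ^ k)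
            - Finsupp.single (n + k + 1) (r * t ^ k * t)) := by
      rw [show n + (k + 1) = n + k + 1 from rfl, pow_succ, ← mul_assoc]
      abel
    rwa [he]

lemma range_le_ker : LinearMap.range (teleMap t) ≤ LinearMap.ker (locMap t) := by
  rintro _ ⟨w, rfl⟩
  have := locMap_comp_teleMap t
  rw [LinearMap.mem_ker, ← LinearMap.comp_apply, this, LinearMap.zero_apply]

lemma mem_range_of_locMap_eq_zero (x : ℕ →₀ R) (hx : locMap t x = 0) :
    x ∈ LinearMap.range (teleMap t) := by
  classical
  set N := x.support.sup id with hN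
  set b : R := ∑ n ∈ x.support, x n * t ^ (N - n) with hb
  have hxb : x - Finsupp.single N b ∈ LinearMap.range (teleMap t) := by
    have hx1 : x = ∑ n ∈ x.support, Finsupp.single n (x n) := (Finsupp.sum_single x).symm
    have hsb : Finsupp.single N b = ∑ n ∈ x.support, Finsupp.single N (x n * t ^ (N - n)) :=
      Finsupp.single_finset_sum _ _ _
    rw [hb] at hsb
    nth_rewrite 1 [hx1]
    rw [hsb, ← Finset.sum_sub_distrib]
    apply Submodule.sum_mem
    intro n hn
    have hnN : n ≤ N := Finset.le_sup (f := id) hn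
    have h := single_sub_mem_range t n (N - n) (x n)
    rwa [Nat.add_sub_cancel' hnN] at h
  have hsb0 : locMap t (Finsupp.single N b) = 0 := by
    have h1 : locMap t (x - Finsupp.single N b) = 0 := range_le_ker t hxb
    rw [map_sub, hx, zero_sub, neg_eq_zero] at h1
    exact h1
  rw [locMap_single, IsLocalization.mk'_eq_zero_iff] at hsb0
  obtain ⟨c, hc⟩ := hsb0
  obtain ⟨m, hm⟩ := c.2
  have hzero : Finsupp.single (N + m) (b * t ^ m) = 0 := by
    have hm' : t ^ m = (c : R) := hm
    rw [mul_comm, hm', hc, Finsupp.single_zero]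
  have h4 := single_sub_mem_range t N m b
  rw [hzero, sub_zero] at h4
  have := Submodule.add_mem _ hxb h4
  rwa [sub_add_cancel] at this
end Ker


section Complex
variable (R : Type u) [CommRing R] (t : R)

/-- The objects of the telescope complex. -/
noncomputable def teleX : ℕ → ModuleCat.{u} R
  | 0 => ModuleCat.of R (ℕ →₀ R)
  | 1 => ModuleCat.of R (ℕ →₀ R)
  | _ => ModuleCat.of R PUnit

/-- The differentials of the telescope complex. -/
noncomputable def teleD : ∀ n : ℕ, teleX R (n + 1) ⟶ teleX R n
  | 0 => ModuleCat.ofHom (teleMap t)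
  | _ + 1 => 0

/-- The telescope complex `⋯ → 0 → ⊕ℕ R → ⊕ℕ R`. -/
noncomputable def teleComplex : ChainComplex (ModuleCat.{u} R) ℕ :=
  ChainComplex.of (teleX R) (teleD R t)
    (fun n => match n with
      | 0 => Limits.zero_comp
      | _ + 1 => Limits.zero_comp)

lemma teleComplex_d10 : (teleComplex R t).d 1 0 = ModuleCat.ofHom (teleMap t) :=
  ChainComplex.of_d (teleX R) (teleD R t) 0

lemma teleComplex_dsucc (n : ℕ) : (teleComplex R t).d (n + 2) (n + 1) = 0 :=
  ChainComplex.of_d (teleX R) (teleD R t) (n + 1)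

instance teleComplex_projective : ∀ n : ℕ, Projective ((teleComplex R t).X n)
  | 0 => ModuleCat.projective_of_free (M := ModuleCat.of R (ℕ →₀ R)) Finsupp.basisSingleOne
  | 1 => ModuleCat.projective_of_free (M := ModuleCat.of R (ℕ →₀ R)) Finsupp.basisSingleOne
  | _ + 2 => ModuleCat.projective_of_free (M := ModuleCat.of R PUnit)
      (Module.Basis.empty (ι := PEmpty.{u+1}) _)

lemma teleComplex_X_subsingleton (n : ℕ) : Subsingleton ((teleComplex R t).X (n + 2)) := by
  show Subsingleton PUnit
  infer_instance

/-- The augmentation map to the localization. -/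
noncomputable def telePi :
    teleComplex R t ⟶ (ChainComplex.single₀ (ModuleCat.{u} R)).obj
      (ModuleCat.of R (Localization.Away t)) :=
  (ChainComplex.toSingle₀Equiv _ _).symm
    ⟨ModuleCat.ofHom (locMap t), by
      rw [teleComplex_d10]
      exact ModuleCat.hom_ext (locMap_comp_teleMap t)⟩

lemma telePi_f_zero : (telePi R t).f 0 = ModuleCat.ofHom (locMap t) :=
  ChainComplex.toSingle₀Equiv_symm_apply_f_zero _ _

end Complex

section Res
variable (R : Type u) [CommRing R] (t : R)

instance telePi_quasiIso : QuasiIso (telePi R t) where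
  quasiIsoAt n := by
    match n with
    | 0 =>
      rw [ChainComplex.quasiIsoAt₀_iff, ShortComplex.quasiIso_iff_of_zeros'
        _ (by exact HomologicalComplex.shape (teleComplex R t) 0 0 (by rw [ComplexShape.down_Rel]; omega))
        (by simp; rfl) (by simp; rfl)]
      constructor
      · rw [ShortComplex.moduleCat_exact_iff]
        intro x hx
        dsimp at x hx ⊢
        change ((telePi R t).f 0).hom x = 0 at hx
        rw [telePi_f_zero] at hx
        obtain ⟨w, hw⟩ := mem_range_of_locMap_eq_zero t x hx
        refine ⟨w, ?_⟩
        change ((teleComplex R t).d 1 0).hom w = x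
        rw [teleComplex_d10]
        exact hw
      · change Epi ((telePi R t).f 0)
        rw [telePi_f_zero]
        exact (ModuleCat.epi_iff_surjective (ModuleCat.ofHom (locMap t))).mpr (locMap_surjective t)
    | 1 =>
      rw [quasiIsoAt_iff_exactAt' (telePi R t) 1 (ChainComplex.exactAt_succ_single_obj _ 0),
        HomologicalComplex.exactAt_iff' _ 2 1 0 (by simp) (by simp),
        ShortComplex.moduleCat_exact_iff]
      intro x hx
      dsimp at x hx ⊢
      change ((teleComplex R t).d 1 0).hom x = 0 at hx
      rw [teleComplex_d10] at hx
      have hx0 : x = 0 := by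
        apply teleMap_injective t
        exact hx.trans (map_zero (teleMap t)).symm
      refine ⟨0, ?_⟩
      rw [map_zero, hx0]
    | n + 2 =>
      rw [quasiIsoAt_iff_exactAt' (telePi R t) (n + 2)
        (ChainComplex.exactAt_succ_single_obj _ (n + 1)),
        HomologicalComplex.exactAt_iff]
      exact ShortComplex.exact_of_isZero_X₂ _
        (@ModuleCat.isZero_of_subsingleton _ _ _ (teleComplex_X_subsingleton R t n))

/-- The telescope projective resolution of the localization. -/
noncomputable def teleRes : ProjectiveResolution (ModuleCat.of R (Localization.Away t)) where
  complex := teleComplex R t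
  π := telePi R t

end Res


section ML
variable (C : Type u) [Field C] {R : Type u} [CommRing R] [Algebra C R] (t : R)
  {M : Type u} [AddCommGroup M] [Module R M] [Module C M] [IsScalarTower C R M]
  [FiniteDimensional C M]

/-- the `C`-linear endomorphism given by multiplication by `t`. -/
noncomputable def tEnd : Module.End C M where
  toFun x := t • x
  map_add' := smul_add t
  map_smul' c x := smul_comm t c x

@[simp] lemma tEnd_apply (x : M) : tEnd C t x = t • x := rfl

lemma exists_stable_range :
    ∃ K : ℕ, Submodule.map (tEnd C t (M := M)) (LinearMap.range ((tEnd C t (M := M)) ^ K)) =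
      LinearMap.range ((tEnd C t (M := M)) ^ K) := by
  set φ := tEnd C t (M := M)
  have hmap : ∀ k : ℕ, Submodule.map φ (LinearMap.range (φ ^ k)) = LinearMap.range (φ ^ (k + 1)) := by
    intro k
    rw [pow_succ']
    exact (LinearMap.range_comp _ _).symm
  have hle : ∀ k : ℕ, LinearMap.range (φ ^ (k + 1)) ≤ LinearMap.range (φ ^ k) := by
    intro k
    rw [pow_succ]
    exact LinearMap.range_comp_le_range _ _
  by_contra h
  push_neg at h
  have hlt : ∀ k : ℕ, LinearMap.range (φ ^ (k+1)) < LinearMap.range (φ ^ k) := by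
    intro k
    exact lt_of_le_of_ne (hle k) (by rw [← hmap]; exact h k)
  have hrank : ∀ k : ℕ, Module.finrank C (LinearMap.range (φ ^ (k+1)))
      < Module.finrank C (LinearMap.range (φ ^ k)) :=
    fun k => Submodule.finrank_lt_finrank_of_lt (hlt k)
  have : ∀ k : ℕ, Module.finrank C (LinearMap.range (φ ^ k)) + k
      ≤ Module.finrank C (LinearMap.range (φ ^ 0)) := by
    intro k
    induction k with
    | zero => simp
    | succ n ih => have := hrank n; omega
  have h2 := this (Module.finrank C (LinearMap.range ((φ : Module.End C M) ^ 0)) + 1)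
  omega

end ML

section ML2
variable (C : Type u) [Field C] {R : Type u} [CommRing R] [Algebra C R] (t : R)
  {M : Type u} [AddCommGroup M] [Module R M] [Module C M] [IsScalarTower C R M]
  [FiniteDimensional C M]

lemma tEnd_pow_apply (k : ℕ) (x : M) : ((tEnd C t (M := M)) ^ k) x = t ^ k • x := by
  induction k with
  | zero => simp
  | succ n ih => rw [pow_succ', pow_succ', Module.End.mul_apply, ih, tEnd_apply, smul_smul]

include C in
lemma exists_ml_seq' (y : ℕ → M) : ∃ m : ℕ → M, ∀ n, m n = y n + t • m (n + 1) := by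
  obtain ⟨K, hK⟩ := exists_stable_range C t (M := M)
  set N := LinearMap.range ((tEnd C t (M := M)) ^ K) with hN
  have hc : ∀ n : ℕ, t ^ K • y (n + K) ∈ N := fun n => ⟨y (n + K), tEnd_pow_apply C t K _⟩
  have hsurj : ∀ z : N, ∃ u : N, t • (u : M) = (z : M) := by
    intro z
    have hz : (z : M) ∈ Submodule.map (tEnd C t (M := M)) N := by rw [hK]; exact z.2
    obtain ⟨u, hu, huz⟩ := hz
    exact ⟨⟨u, hu⟩, huz⟩
  choose g hg using hsurj
  set c : ℕ → N := fun n => ⟨t ^ K • y (n + K), hc n⟩ with hcdef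
  set W : ℕ → N := fun n => Nat.rec (0 : N) (fun n w => g (w - c n)) n with hWdef
  have hWsucc : ∀ n : ℕ, W (n + 1) = g (W n - c n) := fun n => rfl
  have hW : ∀ n : ℕ, t • (W (n + 1) : M) = (W n : M) - t ^ K • y (n + K) := by
    intro n
    rw [hWsucc n, hg (W n - c n)]
    simp [hcdef]
  refine ⟨fun n => (∑ j ∈ Finset.range K, t ^ j • y (n + j)) + (W n : M), fun n => ?_⟩
  rw [smul_add, Finset.smul_sum, hW n]
  have hs : ∀ j : ℕ, t • t ^ j • y (n + 1 + j) = t ^ (j + 1) • y (n + (j + 1)) := by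
    intro j
    rw [smul_smul, ← pow_succ', add_assoc, add_comm 1 j]
  simp_rw [hs]
  have h1 : y n + ∑ j ∈ Finset.range K, t ^ (j + 1) • y (n + (j + 1))
      = ∑ j ∈ Finset.range (K + 1), t ^ j • y (n + j) := by
    rw [Finset.sum_range_succ' (fun j => t ^ j • y (n + j)) K]
    simp [add_comm]
  have h2 : ∑ j ∈ Finset.range (K + 1), t ^ j • y (n + j)
      = (∑ j ∈ Finset.range K, t ^ j • y (n + j)) + t ^ K • y (n + K) :=
    Finset.sum_range_succ _ _
  rw [← add_assoc (y n), h1, h2]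
  abel

end ML2

section Precomp
variable (C : Type u) [Field C] {R : Type u} [CommRing R] [Algebra C R] (t : R)
  {M : Type u} [AddCommGroup M] [Module R M] [Module C M] [IsScalarTower C R M]
  [FiniteDimensional C M]

include C in
lemma precomp_surjective (g : (ℕ →₀ R) →ₗ[R] M) :
    ∃ h : (ℕ →₀ R) →ₗ[R] M, h ∘ₗ teleMap t = g := by
  obtain ⟨m, hm⟩ := exists_ml_seq' C t (fun n => g (Finsupp.single n 1))
  refine ⟨Finsupp.lsum ℕ fun n => LinearMap.toSpanSingleton R M (m n), ?_⟩
  apply Finsupp.lhom_ext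
  intro n r
  rw [LinearMap.comp_apply, teleMap_single, map_sub, Finsupp.lsum_single, Finsupp.lsum_single,
    LinearMap.toSpanSingleton_apply, LinearMap.toSpanSingleton_apply]
  have hg : g (Finsupp.single n r) = r • g (Finsupp.single n 1) := by
    rw [← map_smul, Finsupp.smul_single, smul_eq_mul, mul_one]
  rw [hg, hm n, smul_add, mul_smul, add_sub_cancel_right]

/-- Let `C` be a field, `R` a commutative `C`-algebra, and `t ∈ R`.
If `M` is an `R`-module that is finite-dimensional as a `C`-vector space, then
`Ext^i_R(R_t, M) = 0` for all `i ≥ 1`, where `R_t` is the localization of `R` away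
from `t`. -/
theorem stmt2 (C : Type u) [Field C] (R : Type u) [CommRing R] [Algebra C R] (t : R)
    (M : Type u) [AddCommGroup M] [Module R M] [Module C M] [IsScalarTower C R M]
    [FiniteDimensional C M] (i : ℕ) (hi : 1 ≤ i) :
    Subsingleton
      (((Ext R (ModuleCat.{u} R) i).obj
          (Opposite.op (ModuleCat.of R (Localization.Away t)))).obj
        (ModuleCat.of R M)) := by
  have hz : Limits.IsZero
      (((teleComplex R t).linearYonedaObj R (ModuleCat.of R M)).homology i) := by
    obtain ⟨n, rfl⟩ : ∃ n, i = n + 1 := ⟨i - 1, by omega⟩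
    match n with
    | 0 =>
      rw [← HomologicalComplex.exactAt_iff_isZero_homology,
        HomologicalComplex.exactAt_iff' _ 0 1 2 (by simp) (by simp),
        ShortComplex.moduleCat_exact_iff]
      intro g _
      dsimp at g ⊢
      obtain ⟨h, hh⟩ := precomp_surjective C t (M := M) (g : (teleComplex R t).X 0 ⟶ ModuleCat.of R M).hom
      refine ⟨ModuleCat.ofHom h, ?_⟩
      show (teleComplex R t).d 1 0 ≫ ModuleCat.ofHom h = g
      rw [teleComplex_d10]
      exact ModuleCat.hom_ext hh
    | n + 1 =>
      rw [← HomologicalComplex.exactAt_iff_isZero_homology,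
        HomologicalComplex.exactAt_iff]
      refine ShortComplex.exact_of_isZero_X₂ _ (@ModuleCat.isZero_of_subsingleton _ _ _ ?_)
      show Subsingleton (((teleComplex R t).X (n + 2)) ⟶ ModuleCat.of R M)
      haveI := teleComplex_X_subsingleton R t n
      exact ⟨fun a b => ModuleCat.hom_ext (Subsingleton.elim _ _)⟩
  have hz2 : Limits.IsZero
      (((Ext R (ModuleCat.{u} R) i).obj
          (Opposite.op (ModuleCat.of R (Localization.Away t)))).obj
        (ModuleCat.of R M)) :=
    Limits.IsZero.of_iso hz ((teleRes R t).isoExt i (ModuleCat.of R M))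
  set Z := (((Ext R (ModuleCat.{u} R) i).obj
      (Opposite.op (ModuleCat.of R (Localization.Away t)))).obj
        (ModuleCat.of R M)) with hZ
  have hid := hz2.eq_of_src (𝟙 Z) 0
  refine ⟨fun a b => ?_⟩
  have h1 : ∀ x : Z, x = 0 := by
    intro x
    calc x = (𝟙 Z) x := rfl
    _ = (0 : Z ⟶ Z) x := by rw [hid]
    _ = 0 := rfl
  rw [h1 a, h1 b]
end Precomp
end
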